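/- Private Signed Measure Mechanism guarantee: let (Ω,ρ) be a metric space with finite diameter, {Ω_i}_{i∈[m]} a partition of Ω with chosen representatives ω_i ∈ Ω_i, S ∈ Ω^n with counts n_i = |{j ∈ [n] : S[j] ∈ Ω_i}|, ε > 0, δ ∈ (0,1). Let N_1,…,N_m be i.i.d. Gaussian random variables N(0, log(1/δ)/ε²), let μ̃ be the (random) signed measure with μ̃({ω_i}) = (n_i + N_i)/n and no mass elsewhere, let μ̂ be a measurably selected minimizer of BL(μ̃, ·) over probability measures supported on {ω_1,…,ω_m}, and let μ be any finitely supported probability measure on Ω, measurable in the noise, with μ(Ω_i) = μ̂({ω_i}) for all i. Then E[BL(μ_S, μ)] ≤ 2·(max_{i∈[m]} diam(Ω_i) + (m·√(log(1/δ))/(nε))·G_m(F_BL)). -/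

import Mathlib

open MeasureTheory ProbabilityTheory Real Set

noncomputable section

/-- The class of bounded 1-Lipschitz functions on a metric space. -/
def FBL (Ω : Type*) [PseudoMetricSpace Ω] : Set (Ω → ℝ) :=
  {f | (∀ z, |f z| ≤ Metric.diam (Set.univ : Set Ω)) ∧
       ∀ z1 z2, f z1 - f z2 ≤ dist z1 z2}

/-- Bounded-Lipschitz distance between finitely supported signed measures. -/
def BL2 {Ω : Type*} [PseudoMetricSpace Ω] {n m : ℕ}
    (x : Fin n → Ω) (a : Fin n → ℝ) (y : Fin m → Ω) (b : Fin m → ℝ) : ℝ :=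
  ⨆ f : FBL Ω, ((∑ i, a i * (f : Ω → ℝ) (x i)) - ∑ j, b j * (f : Ω → ℝ) (y j))

/-- probability vector in the simplex Δ_m -/
def probVec {m : ℕ} (b : Fin m → ℝ) : Prop := (∀ j, 0 ≤ b j) ∧ ∑ j, b j = 1

/-- Gaussian complexity of a function class. -/
def gaussComp (Ω : Type*) [PseudoMetricSpace Ω] (n : ℕ) (F : Set (Ω → ℝ)) : ℝ :=
  ⨆ z : Fin n → Ω, ∫ x : Fin n → ℝ,
    (⨆ f : F, (1 / (n : ℝ)) * |∑ i, x i * (f : Ω → ℝ) (z i)|)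
      ∂(Measure.pi fun _ => gaussianReal 0 1)

namespace PSMM

variable {Ω : Type*} [PseudoMetricSpace Ω]

lemma zero_mem_FBL : (fun _ => (0:ℝ)) ∈ FBL Ω :=
  ⟨fun z => by simp [Metric.diam_nonneg], fun z1 z2 => by simpa using dist_nonneg⟩

instance : Nonempty (FBL Ω) := ⟨⟨_, zero_mem_FBL⟩⟩

lemma FBL.abs_sum_le {k : ℕ} (z : Fin k → Ω) (a : Fin k → ℝ) {f : Ω → ℝ} (hf : f ∈ FBL Ω) :
    |∑ i, a i * f (z i)| ≤ (∑ i, |a i|) * Metric.diam (Set.univ : Set Ω) := by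
  calc |∑ i, a i * f (z i)| ≤ ∑ i, |a i * f (z i)| := Finset.abs_sum_le_sum_abs _ _
    _ ≤ ∑ i, |a i| * Metric.diam (Set.univ : Set Ω) := by
        refine Finset.sum_le_sum fun i _ => ?_
        rw [abs_mul]
        exact mul_le_mul_of_nonneg_left (hf.1 _) (abs_nonneg _)
    _ = _ := by rw [← Finset.sum_mul]

lemma bddAbove_BL2 {k l : ℕ} (x : Fin k → Ω) (a : Fin k → ℝ) (y : Fin l → Ω) (b : Fin l → ℝ) :
    BddAbove (Set.range fun f : FBL Ω =>
      ((∑ i, a i * (f : Ω → ℝ) (x i)) - ∑ j, b j * (f : Ω → ℝ) (y j))) := by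
  refine ⟨(∑ i, |a i|) * Metric.diam (Set.univ : Set Ω)
    + (∑ j, |b j|) * Metric.diam (Set.univ : Set Ω), ?_⟩
  rintro _ ⟨f, rfl⟩
  have h1 := FBL.abs_sum_le x a f.2
  have h2 := FBL.abs_sum_le y b f.2
  cases abs_le.mp h1 with | intro h1a h1b => cases abs_le.mp h2 with | intro h2a h2b =>
  dsimp only
  linarith

lemma BL2_nonneg {k l : ℕ} (x : Fin k → Ω) (a : Fin k → ℝ) (y : Fin l → Ω) (b : Fin l → ℝ) :
    0 ≤ BL2 x a y b := by
  have h := le_ciSup (bddAbove_BL2 x a y b) (⟨_, zero_mem_FBL⟩ : FBL Ω)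
  rw [BL2]
  simpa using h

lemma le_BL2 {k l : ℕ} (x : Fin k → Ω) (a : Fin k → ℝ) (y : Fin l → Ω) (b : Fin l → ℝ)
    {f : Ω → ℝ} (hf : f ∈ FBL Ω) :
    (∑ i, a i * f (x i)) - ∑ j, b j * f (y j) ≤ BL2 x a y b :=
  le_ciSup (bddAbove_BL2 x a y b) (⟨f, hf⟩ : FBL Ω)

lemma BL2_le {k l : ℕ} (x : Fin k → Ω) (a : Fin k → ℝ) (y : Fin l → Ω) (b : Fin l → ℝ)
    {C : ℝ} (h : ∀ f : Ω → ℝ, f ∈ FBL Ω →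
      (∑ i, a i * f (x i)) - ∑ j, b j * f (y j) ≤ C) :
    BL2 x a y b ≤ C :=
  ciSup_le fun f => h f f.2

/-- the key supremum `gsup z N = ⨆ f ∈ FBL, |∑ i, N i * f (z i)|`. -/
def gsup {k : ℕ} (z : Fin k → Ω) (N : Fin k → ℝ) : ℝ :=
  ⨆ f : FBL Ω, |∑ i, N i * (f : Ω → ℝ) (z i)|

lemma bddAbove_gsup {k : ℕ} (z : Fin k → Ω) (N : Fin k → ℝ) :
    BddAbove (Set.range fun f : FBL Ω => |∑ i, N i * (f : Ω → ℝ) (z i)|) := by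
  refine ⟨(∑ i, |N i|) * Metric.diam (Set.univ : Set Ω), ?_⟩
  rintro _ ⟨f, rfl⟩
  exact FBL.abs_sum_le z N f.2

lemma abs_le_gsup {k : ℕ} (z : Fin k → Ω) (N : Fin k → ℝ) {f : Ω → ℝ} (hf : f ∈ FBL Ω) :
    |∑ i, N i * f (z i)| ≤ gsup z N :=
  le_ciSup (bddAbove_gsup z N) (⟨f, hf⟩ : FBL Ω)

lemma gsup_nonneg {k : ℕ} (z : Fin k → Ω) (N : Fin k → ℝ) : 0 ≤ gsup z N := by
  have := abs_le_gsup z N zero_mem_FBL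
  simpa using this

lemma gsup_le {k : ℕ} (z : Fin k → Ω) (N : Fin k → ℝ) {C : ℝ}
    (h : ∀ f : Ω → ℝ, f ∈ FBL Ω → |∑ i, N i * f (z i)| ≤ C) : gsup z N ≤ C :=
  ciSup_le fun f => h f f.2

lemma gsup_le_sum_abs {k : ℕ} (z : Fin k → Ω) (N : Fin k → ℝ) :
    gsup z N ≤ (∑ i, |N i|) * Metric.diam (Set.univ : Set Ω) :=
  gsup_le z N fun _ hf => FBL.abs_sum_le z N hf

lemma gsup_smul {k : ℕ} (z : Fin k → Ω) (N : Fin k → ℝ) {σ : ℝ} (hσ : 0 ≤ σ) :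
    gsup z (fun i => σ * N i) = σ * gsup z N := by
  rw [gsup, gsup, Real.mul_iSup_of_nonneg hσ]
  exact iSup_congr fun f => by
    simp_rw [mul_assoc, ← Finset.mul_sum, abs_mul, abs_of_nonneg hσ]

lemma gsup_lipschitz {k : ℕ} (z : Fin k → Ω) (N N' : Fin k → ℝ) :
    gsup z N ≤ gsup z N' + (∑ i, |N i - N' i|) * Metric.diam (Set.univ : Set Ω) := by
  refine gsup_le z N fun f hf => ?_
  have h1 : |∑ i, N i * f (z i)| ≤ |∑ i, N' i * f (z i)| + |∑ i, (N i - N' i) * f (z i)| := by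
    have : ∑ i, N i * f (z i) = (∑ i, N' i * f (z i)) + ∑ i, (N i - N' i) * f (z i) := by
      rw [← Finset.sum_add_distrib]; congr 1; funext i; ring
    rw [this]; exact abs_add_le _ _
  refine h1.trans (add_le_add (abs_le_gsup z N' hf) (FBL.abs_sum_le z _ hf))

lemma gsup_continuous {k : ℕ} (z : Fin k → Ω) : Continuous fun N : Fin k → ℝ => gsup z N := by
  set D := Metric.diam (Set.univ : Set Ω) with hD
  have hD0 : 0 ≤ D := Metric.diam_nonneg
  have key : ∀ N N' : Fin k → ℝ, gsup z N - gsup z N' ≤ (k * D) * dist N N' := by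
    intro N N'
    have h1 := gsup_lipschitz z N N'
    have h2 : (∑ i, |N i - N' i|) ≤ (k : ℝ) * dist N N' := by
      calc (∑ i, |N i - N' i|) ≤ ∑ _i : Fin k, dist N N' := by
            refine Finset.sum_le_sum fun i _ => ?_
            rw [← Real.dist_eq]
            exact dist_le_pi_dist N N' i
        _ = (k : ℝ) * dist N N' := by simp [mul_comm]
    have h3 : (∑ i, |N i - N' i|) * D ≤ ((k : ℝ) * dist N N') * D :=
      mul_le_mul_of_nonneg_right h2 hD0
    nlinarith [dist_nonneg (x := N) (y := N')]
  have : LipschitzWith (Real.toNNReal (k * D)) fun N : Fin k → ℝ => gsup z N := by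
    refine LipschitzWith.of_dist_le_mul fun N N' => ?_
    rw [Real.dist_eq, Real.coe_toNNReal _ (by positivity)]
    rw [abs_sub_le_iff]
    exact ⟨key N N', by rw [dist_comm N N']; exact key N' N⟩
  exact this.continuous

lemma measurable_gsup {k : ℕ} (z : Fin k → Ω) :
    Measurable fun N : Fin k → ℝ => gsup z N := (gsup_continuous z).measurable

end PSMM

namespace PSMM
open NNReal

lemma integrable_abs_mul_exp {b : ℝ} (hb : 0 < b) :
    Integrable (fun x : ℝ => |x| * Real.exp (-b * x ^ 2)) := by
  refine Integrable.mono'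
    ((integrable_exp_neg_mul_sq hb).add
      ((integrable_exp_neg_mul_sq (half_pos hb)).const_mul (2 / b)))
    (Continuous.aestronglyMeasurable (by continuity)) ?_
  refine Filter.Eventually.of_forall fun x => ?_
  have h1 : |x| ≤ 1 + x ^ 2 := by nlinarith [sq_nonneg (|x| - 1), sq_abs x, abs_nonneg x]
  have h2 : x ^ 2 ≤ (2 / b) * Real.exp (b / 2 * x ^ 2) := by
    have h := Real.add_one_le_exp (b / 2 * x ^ 2)
    have hb2 : (0:ℝ) < 2 / b := by positivity
    have e : (2 / b) * (b / 2 * x ^ 2 + 1) = x ^ 2 + 2 / b := by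
      field_simp
    linarith [mul_le_mul_of_nonneg_left h hb2.le]
  have h3 : Real.exp (b / 2 * x ^ 2) * Real.exp (-b * x ^ 2) = Real.exp (-(b / 2) * x ^ 2) := by
    rw [← Real.exp_add]; ring_nf
  have hexp : (0:ℝ) ≤ Real.exp (-b * x ^ 2) := le_of_lt (Real.exp_pos _)
  rw [Real.norm_eq_abs, abs_of_nonneg (by positivity)]
  calc |x| * Real.exp (-b * x ^ 2) ≤ (1 + x ^ 2) * Real.exp (-b * x ^ 2) :=
        mul_le_mul_of_nonneg_right h1 hexp
    _ = Real.exp (-b * x ^ 2) + x ^ 2 * Real.exp (-b * x ^ 2) := by ring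
    _ ≤ Real.exp (-b * x ^ 2) + (2 / b) * Real.exp (b / 2 * x ^ 2) * Real.exp (-b * x ^ 2) :=
        add_le_add le_rfl (mul_le_mul_of_nonneg_right h2 hexp)
    _ = Real.exp (-b * x ^ 2) + 2 / b * Real.exp (-(b / 2) * x ^ 2) := by
        rw [mul_assoc, h3]

/-- first absolute moment of a centered Gaussian is finite -/
lemma integrable_abs_gaussianReal (v : ℝ≥0) :
    Integrable (fun x : ℝ => |x|) (gaussianReal 0 v) := by
  by_cases hv : v = 0
  · subst hv
    rw [gaussianReal_zero_var]
    exact (integrable_const |(0:ℝ)|).congr (MeasureTheory.ae_eq_dirac (fun x : ℝ => |x|)).symm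
  · rw [gaussianReal_of_var_ne_zero _ hv]
    rw [integrable_withDensity_iff (measurable_gaussianPDF _ _)
      (Filter.Eventually.of_forall fun x => ENNReal.ofReal_lt_top)]
    have hvpos : (0:ℝ) < (v:ℝ) := by positivity
    have hpos : (0:ℝ) < (2 * (v:ℝ))⁻¹ := by positivity
    have hform : (fun x : ℝ => |x| * ((gaussianPDF 0 v x).toReal))
        = fun x => (Real.sqrt (2 * π * v))⁻¹ * (|x| * Real.exp (-(2 * (v:ℝ))⁻¹ * x ^ 2)) := by
      funext x
      rw [gaussianPDF, ENNReal.toReal_ofReal (gaussianPDFReal_nonneg _ _ _), gaussianPDFReal]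
      rw [sub_zero, div_eq_mul_inv]
      ring_nf
    rw [hform]
    exact (integrable_abs_mul_exp hpos).const_mul _

/-- marginal of a product of probability measures -/
lemma map_eval_pi {ι : Type*} [Fintype ι] {α : ι → Type*} [∀ i, MeasurableSpace (α i)]
    (μ : ∀ i, Measure (α i)) [∀ i, IsProbabilityMeasure (μ i)] (i : ι) :
    (Measure.pi μ).map (Function.eval i) = μ i := by
  classical
  ext s hs
  rw [Measure.map_apply (measurable_pi_apply i) hs, Set.eval_preimage, Measure.pi_pi]
  rw [Finset.prod_eq_single i (fun j _ hj => by simp [Function.update_of_ne hj])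
    (fun h => absurd (Finset.mem_univ i) h)]
  simp

lemma integrable_eval_abs {ι : Type*} [Fintype ι] (μ : ι → Measure ℝ)
    [∀ i, IsProbabilityMeasure (μ i)] (i : ι)
    (h : Integrable (fun x : ℝ => |x|) (μ i)) :
    Integrable (fun N : ∀ _ : ι, ℝ => |N i|) (Measure.pi μ) := by
  have key := (integrable_map_measure (μ := Measure.pi μ)
    (f := (Function.eval i : (∀ _ : ι, ℝ) → ℝ)) (g := fun x : ℝ => |x|)
    (by rw [map_eval_pi]; exact h.aestronglyMeasurable)
    (measurable_pi_apply i).aemeasurable).mp (by rwa [map_eval_pi])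
  exact key

/-- scaling a product of standard Gaussians -/
lemma pi_map_scale (k : ℕ) (σ : ℝ) :
    (Measure.pi fun _ : Fin k => gaussianReal 0 ⟨σ ^ 2, sq_nonneg σ⟩) =
      Measure.map (fun x : Fin k → ℝ => fun i => σ * x i)
        (Measure.pi fun _ : Fin k => gaussianReal 0 1) := by
  have hφ : Measurable (fun x : Fin k → ℝ => fun i => σ * x i) :=
    measurable_pi_lambda _ fun i => by fun_prop
  set v : NNReal := ⟨σ ^ 2, sq_nonneg σ⟩ with hv
  refine Measure.pi_eq fun s hs => ?_
  rw [Measure.map_apply hφ (MeasurableSet.univ_pi hs)]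
  have hpre : (fun x : Fin k → ℝ => fun i => σ * x i) ⁻¹' Set.univ.pi s
      = Set.univ.pi fun i => (fun t => σ * t) ⁻¹' s i := by
    ext x; simp [Set.mem_pi]
  rw [hpre, Measure.pi_pi]
  refine Finset.prod_congr rfl fun i _ => ?_
  have hmul : Measurable fun t : ℝ => σ * t := by fun_prop
  rw [← Measure.map_apply hmul (hs i), gaussianReal_map_const_mul, mul_zero, mul_one]
  exact congrArg (fun w : NNReal => gaussianReal 0 w (s i)) (NNReal.eq (by rw [hv]; rfl))

variable {Ω : Type*} [PseudoMetricSpace Ω]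

lemma integrable_sum_abs {k : ℕ} (v : ℝ≥0) :
    Integrable (fun N : Fin k → ℝ => ∑ i, |N i|)
      (Measure.pi fun _ : Fin k => gaussianReal 0 v) :=
  integrable_finset_sum _ fun i _ =>
    integrable_eval_abs _ i (integrable_abs_gaussianReal v)

lemma integrable_gsup {k : ℕ} (z : Fin k → Ω) (v : ℝ≥0) :
    Integrable (fun N => gsup z N) (Measure.pi fun _ : Fin k => gaussianReal 0 v) := by
  refine Integrable.mono' ((integrable_sum_abs v).mul_const (Metric.diam (Set.univ : Set Ω)))
    (gsup_continuous z).aestronglyMeasurable ?_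
  refine Filter.Eventually.of_forall fun N => ?_
  rw [Real.norm_eq_abs, abs_of_nonneg (gsup_nonneg z N)]
  exact gsup_le_sum_abs z N

lemma integral_gsup_le_gaussComp {m : ℕ} (hm : 0 < m) (ω : Fin m → Ω) :
    ∫ x, gsup ω x ∂(Measure.pi fun _ : Fin m => gaussianReal 0 1)
      ≤ m * gaussComp Ω m (FBL Ω) := by
  have hm0 : (0:ℝ) < (m:ℝ) := by exact_mod_cast hm
  set π1 : Measure (Fin m → ℝ) := Measure.pi fun _ : Fin m => gaussianReal 0 1 with hπ1
  have hIeq : ∀ z : Fin m → Ω,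
      (∫ x, (⨆ f : FBL Ω, (1 / (m : ℝ)) * |∑ i, x i * (f : Ω → ℝ) (z i)|) ∂π1)
        = (1 / (m : ℝ)) * ∫ x, gsup z x ∂π1 := by
    intro z
    rw [← integral_const_mul]
    congr 1
    funext x
    rw [gsup, Real.mul_iSup_of_nonneg (by positivity : (0:ℝ) ≤ 1 / (m:ℝ))]
  have hbdd : BddAbove (Set.range fun z : Fin m → Ω =>
      ∫ x, (⨆ f : FBL Ω, (1 / (m : ℝ)) * |∑ i, x i * (f : Ω → ℝ) (z i)|) ∂π1) := by
    refine ⟨(1 / (m : ℝ)) * ∫ x, (∑ i, |x i|) * Metric.diam (Set.univ : Set Ω) ∂π1, ?_⟩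
    rintro _ ⟨z, rfl⟩
    dsimp only
    rw [hIeq z]
    refine mul_le_mul_of_nonneg_left ?_ (by positivity)
    refine integral_mono (integrable_gsup z 1)
      ((integrable_sum_abs 1).mul_const _) fun x => gsup_le_sum_abs z x
  have hle : (∫ x, (⨆ f : FBL Ω, (1 / (m : ℝ)) * |∑ i, x i * (f : Ω → ℝ) (ω i)|) ∂π1)
      ≤ gaussComp Ω m (FBL Ω) := le_ciSup hbdd ω
  rw [hIeq ω] at hle
  calc ∫ x, gsup ω x ∂π1 = (m : ℝ) * ((1 / (m : ℝ)) * ∫ x, gsup ω x ∂π1) := by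
        field_simp
    _ ≤ (m : ℝ) * gaussComp Ω m (FBL Ω) := mul_le_mul_of_nonneg_left hle hm0.le

end PSMM

open PSMM

/-- Utility guarantee of the Private Signed Measure Mechanism with Gaussian noise. -/
theorem psmm_gaussian_guarantee
    {Ω : Type*} [MetricSpace Ω] [MeasurableSpace Ω]
    (hbdd : Bornology.IsBounded (Set.univ : Set Ω))
    {m n K : ℕ} (hm : 0 < m) (hn : 0 < n)
    (P : Fin m → Set Ω) (hdisj : Pairwise (Function.onFun Disjoint P))
    (hcover : ⋃ i, P i = Set.univ)
    (ω : Fin m → Ω) (hω : ∀ i, ω i ∈ P i)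
    (S : Fin n → Ω)
    (ε δ : ℝ) (hε : 0 < ε) (hδ : δ ∈ Set.Ioo (0 : ℝ) 1)
    (μt : (Fin m → ℝ) → Fin m → ℝ)
    (hμt : ∀ N : Fin m → ℝ, ∀ i,
      μt N i = ((Nat.card {j : Fin n // S j ∈ P i} : ℝ) + N i) / n)
    (μh : (Fin m → ℝ) → Fin m → ℝ) (hμhMeas : Measurable μh)
    (hμh : ∀ N, probVec (μh N) ∧
      ∀ ν : Fin m → ℝ, probVec ν → BL2 ω (μt N) ω (μh N) ≤ BL2 ω (μt N) ω ν)
    (y : (Fin m → ℝ) → Fin K → Ω) (c : (Fin m → ℝ) → Fin K → ℝ)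
    (hyMeas : Measurable y) (hcMeas : Measurable c)
    (hc : ∀ N, probVec (c N))
    (hmatch : ∀ N i, ∑ j, (P i).indicator (fun _ => c N j) (y N j) = μh N i) :
    ∫ N : Fin m → ℝ, BL2 S (fun _ => (n : ℝ)⁻¹) (y N) (c N)
        ∂(Measure.pi fun _ : Fin m => gaussianReal 0 (Real.log (1 / δ) / ε ^ 2).toNNReal)
      ≤ 2 * ((⨆ i, Metric.diam (P i))
          + (m * Real.sqrt (Real.log (1 / δ)) / (n * ε)) * gaussComp Ω m (FBL Ω)) := by
  classical
  haveI : Nonempty (Fin m) := ⟨⟨0, hm⟩⟩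
  have hn0 : (0:ℝ) < (n:ℝ) := by exact_mod_cast hn
  -- log (1/δ) > 0
  have hL : 0 < Real.log (1 / δ) := Real.log_pos (one_lt_one_div hδ.1 hδ.2)
  set σ : ℝ := Real.sqrt (Real.log (1 / δ)) / ε with hσdef
  have hσ0 : 0 ≤ σ := by positivity
  have hV : (Real.log (1 / δ) / ε ^ 2).toNNReal = (⟨σ ^ 2, sq_nonneg σ⟩ : NNReal) := by
    ext
    rw [Real.coe_toNNReal _ (by positivity)]
    show Real.log (1 / δ) / ε ^ 2 = σ ^ 2
    rw [hσdef, div_pow, Real.sq_sqrt hL.le]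
  set V : NNReal := (Real.log (1 / δ) / ε ^ 2).toNNReal with hVdef
  set ν : Measure (Fin m → ℝ) := Measure.pi fun _ : Fin m => gaussianReal 0 V with hν
  set D : ℝ := ⨆ i, Metric.diam (P i) with hD
  have hDle : ∀ i, Metric.diam (P i) ≤ D := fun i =>
    le_ciSup (f := fun i => Metric.diam (P i)) (Set.Finite.bddAbove (Set.finite_range _)) i
  have hD0 : 0 ≤ D := le_trans Metric.diam_nonneg (hDle (Classical.arbitrary _))
  -- the partition index function
  have hex : ∀ z : Ω, ∃ i, z ∈ P i := fun z =>
    Set.mem_iUnion.mp (hcover.symm ▸ Set.mem_univ z)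
  choose idx hπ using hex
  have hπeq : ∀ {z : Ω} {i : Fin m}, z ∈ P i → idx z = i := by
    intro z i hz
    by_contra hne
    exact Set.disjoint_left.mp (hdisj hne) (hπ z) hz
  set b : Fin m → ℝ := fun i => (Nat.card {j : Fin n // S j ∈ P i} : ℝ) / n with hb
  have hcount : ∀ i, (Nat.card {j : Fin n // S j ∈ P i})
      = (Finset.univ.filter fun j => idx (S j) = i).card := by
    intro i
    rw [Nat.card_eq_fintype_card, Fintype.card_subtype]
    congr 1
    ext j
    simp only [Finset.mem_filter, Finset.mem_univ, true_and]
    exact ⟨fun h => hπeq h, fun h => h ▸ hπ (S j)⟩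
  have hsumcount : ∑ i, (Nat.card {j : Fin n // S j ∈ P i} : ℝ) = n := by
    have hfib := Finset.card_eq_sum_card_fiberwise
      (f := fun j : Fin n => idx (S j)) (s := Finset.univ) (t := Finset.univ)
      (fun x _ => Finset.mem_univ _)
    have : ∑ i, (Nat.card {j : Fin n // S j ∈ P i}) = n := by
      simp only [hcount]
      rw [← hfib, Finset.card_univ, Fintype.card_fin]
    exact_mod_cast this
  have hbprob : probVec b := by
    constructor
    · intro j
      rw [hb]
      positivity
    · rw [hb, ← Finset.sum_div, hsumcount, div_self (ne_of_gt hn0)]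
  -- the pointwise bound
  have key : ∀ N : Fin m → ℝ,
      BL2 S (fun _ => (n : ℝ)⁻¹) (y N) (c N) ≤ 2 * D + (2 / n) * gsup ω N := by
    intro N
    refine BL2_le _ _ _ _ fun f hf => ?_
    have e1 : (∑ j, (n:ℝ)⁻¹ * f (S j)) - ∑ j, (n:ℝ)⁻¹ * f (ω (idx (S j))) ≤ D := by
      rw [← Finset.sum_sub_distrib]
      calc ∑ j, ((n:ℝ)⁻¹ * f (S j) - (n:ℝ)⁻¹ * f (ω (idx (S j))))
          ≤ ∑ _j : Fin n, (n:ℝ)⁻¹ * D := by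
            refine Finset.sum_le_sum fun j _ => ?_
            rw [← mul_sub]
            refine mul_le_mul_of_nonneg_left ?_ (by positivity)
            exact (hf.2 _ _).trans ((Metric.dist_le_diam_of_mem
              (hbdd.subset (Set.subset_univ _)) (hπ (S j)) (hω _)).trans (hDle _))
        _ = D := by
            rw [Finset.sum_const, Finset.card_univ, Fintype.card_fin, nsmul_eq_mul]
            field_simp
    have e2 : ∑ j, (n:ℝ)⁻¹ * f (ω (idx (S j))) = ∑ i, b i * f (ω i) := by
      rw [← Finset.sum_fiberwise_of_maps_to (fun (j : Fin n) _ => Finset.mem_univ (idx (S j)))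
        (fun j => (n:ℝ)⁻¹ * f (ω (idx (S j))))]
      refine Finset.sum_congr rfl fun i _ => ?_
      have hinner : ∀ j ∈ Finset.univ.filter (fun j => idx (S j) = i),
          (n:ℝ)⁻¹ * f (ω (idx (S j))) = (n:ℝ)⁻¹ * f (ω i) := fun j hj => by
        rw [(Finset.mem_filter.mp hj).2]
      rw [Finset.sum_congr rfl hinner, Finset.sum_const, nsmul_eq_mul]
      simp only [hb, hcount i]
      push_cast
      ring
    have habs : ∑ i, N i * f (ω i) ≤ gsup ω N :=
      (le_abs_self _).trans (abs_le_gsup ω N hf)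
    have habs' : -(∑ i, N i * f (ω i)) ≤ gsup ω N :=
      (neg_le_abs _).trans (abs_le_gsup ω N hf)
    have e3 : (∑ i, b i * f (ω i)) - (∑ i, μt N i * f (ω i))
        = (n:ℝ)⁻¹ * (-(∑ i, N i * f (ω i))) := by
      rw [← Finset.sum_sub_distrib, ← Finset.sum_neg_distrib, Finset.mul_sum]
      refine Finset.sum_congr rfl fun i _ => ?_
      rw [hμt N i, hb]
      field_simp
      ring
    have e4 : (∑ i, μt N i * f (ω i)) - (∑ i, μh N i * f (ω i)) ≤ (n:ℝ)⁻¹ * gsup ω N := by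
      have h1 : (∑ i, μt N i * f (ω i)) - (∑ i, μh N i * f (ω i))
          ≤ BL2 ω (μt N) ω (μh N) := le_BL2 _ _ _ _ hf
      have h2 := (hμh N).2 b hbprob
      have h3 : BL2 ω (μt N) ω b ≤ (n:ℝ)⁻¹ * gsup ω N := by
        refine BL2_le _ _ _ _ fun g hg => ?_
        have heq : (∑ i, μt N i * g (ω i)) - ∑ i, b i * g (ω i)
            = (n:ℝ)⁻¹ * ∑ i, N i * g (ω i) := by
          rw [← Finset.sum_sub_distrib, Finset.mul_sum]
          refine Finset.sum_congr rfl fun i _ => ?_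
          rw [hμt N i, hb]
          field_simp
          ring
        rw [heq]
        exact mul_le_mul_of_nonneg_left
          ((le_abs_self _).trans (abs_le_gsup ω N hg)) (by positivity)
      linarith
    have e5 : (∑ i, μh N i * f (ω i)) - (∑ k, c N k * f (y N k)) ≤ D := by
      have hH : ∑ i, μh N i * f (ω i) = ∑ k, c N k * f (ω (idx (y N k))) := by
        calc ∑ i, μh N i * f (ω i)
            = ∑ i, (∑ k, (P i).indicator (fun _ => c N k) (y N k)) * f (ω i) :=
              Finset.sum_congr rfl fun i _ => by rw [hmatch N i]
          _ = ∑ i, ∑ k, (P i).indicator (fun _ => c N k) (y N k) * f (ω i) :=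
              Finset.sum_congr rfl fun i _ => Finset.sum_mul _ _ _
          _ = ∑ k, ∑ i, (P i).indicator (fun _ => c N k) (y N k) * f (ω i) :=
              Finset.sum_comm
          _ = ∑ k, c N k * f (ω (idx (y N k))) := by
              refine Finset.sum_congr rfl fun k _ => ?_
              rw [Finset.sum_eq_single (idx (y N k))]
              · rw [Set.indicator_of_mem (hπ (y N k))]
              · intro i _ hne
                rw [Set.indicator_of_notMem, zero_mul]
                intro hmem
                exact hne (hπeq hmem).symm
              · intro h
                exact absurd (Finset.mem_univ _) h
      rw [hH, ← Finset.sum_sub_distrib]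
      calc ∑ k, (c N k * f (ω (idx (y N k))) - c N k * f (y N k)) ≤ ∑ k, c N k * D := by
            refine Finset.sum_le_sum fun k _ => ?_
            rw [← mul_sub]
            refine mul_le_mul_of_nonneg_left ?_ ((hc N).1 k)
            exact (hf.2 _ _).trans ((Metric.dist_le_diam_of_mem
              (hbdd.subset (Set.subset_univ _)) (hω _) (hπ (y N k))).trans (hDle _))
        _ = D := by rw [← Finset.sum_mul, (hc N).2, one_mul]
    have e3' : (∑ i, b i * f (ω i)) - (∑ i, μt N i * f (ω i)) ≤ (n:ℝ)⁻¹ * gsup ω N := by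
      rw [e3]
      exact mul_le_mul_of_nonneg_left habs' (by positivity)
    have hgs0 : 0 ≤ gsup ω N := gsup_nonneg ω N
    have h2n : (2 / (n:ℝ)) * gsup ω N = (n:ℝ)⁻¹ * gsup ω N + (n:ℝ)⁻¹ * gsup ω N := by ring
    show (∑ j, (n:ℝ)⁻¹ * f (S j)) - (∑ k, c N k * f (y N k)) ≤ 2 * D + (2 / n) * gsup ω N
    linarith [e1, e2, e3', e4, e5]
  have hgsint : Integrable (fun N => gsup ω N) ν := integrable_gsup ω V
  have hint2 : Integrable (fun N => 2 * D + (2 / n) * gsup ω N) ν :=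
    (integrable_const _).add (hgsint.const_mul _)
  calc ∫ N, BL2 S (fun _ => (n : ℝ)⁻¹) (y N) (c N) ∂ν
      ≤ ∫ N, (2 * D + (2 / n) * gsup ω N) ∂ν := by
        refine integral_mono_of_nonneg (Filter.Eventually.of_forall fun N => BL2_nonneg _ _ _ _)
          hint2 (Filter.Eventually.of_forall key)
    _ = 2 * D + (2 / n) * ∫ N, gsup ω N ∂ν := by
        rw [integral_add (integrable_const _) (hgsint.const_mul _), integral_const,
          integral_const_mul]
        simp
    _ ≤ 2 * ((⨆ i, Metric.diam (P i))
          + (m * Real.sqrt (Real.log (1 / δ)) / (n * ε)) * gaussComp Ω m (FBL Ω)) := by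
        have hmap : ∫ N, gsup ω N ∂ν
            = σ * ∫ x, gsup ω x ∂(Measure.pi fun _ : Fin m => gaussianReal 0 1) := by
          rw [hν, hVdef, hVdef.symm.trans hV, pi_map_scale m σ]
          rw [integral_map (measurable_pi_lambda _ fun i =>
              (measurable_pi_apply i).const_mul σ).aemeasurable
            (by
              rw [← pi_map_scale m σ]
              exact (gsup_continuous ω).aestronglyMeasurable)]
          rw [← integral_const_mul]
          congr 1
          funext x
          exact gsup_smul ω x hσ0
        rw [hmap]
        have h1 : σ * ∫ x, gsup ω x ∂(Measure.pi fun _ : Fin m => gaussianReal 0 1)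
            ≤ σ * ((m : ℝ) * gaussComp Ω m (FBL Ω)) :=
          mul_le_mul_of_nonneg_left (integral_gsup_le_gaussComp hm ω) hσ0
        have h2 : (2 / (n:ℝ)) * (σ * ∫ x, gsup ω x ∂(Measure.pi fun _ : Fin m => gaussianReal 0 1))
            ≤ (2 / (n:ℝ)) * (σ * ((m : ℝ) * gaussComp Ω m (FBL Ω))) :=
          mul_le_mul_of_nonneg_left h1 (by positivity)
        have heq : 2 * D + (2 / (n:ℝ)) * (σ * ((m : ℝ) * gaussComp Ω m (FBL Ω)))
            = 2 * (D + (m * Real.sqrt (Real.log (1 / δ)) / (n * ε)) * gaussComp Ω m (FBL Ω)) := by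
          rw [hσdef]
          field_simp
        rw [← hD]
        linarith
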